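/- Let (Kₙ) be a sequence of compact metrizable subsets of a locally convex Hausdorff space E whose union is bounded, and let (bₙ) be a sequence of positive reals with bₙ → 0. Then the set K = (⋃ₙ bₙKₙ) ∪ {0} is compact and metrizable. -/

import Mathlib

open Set Pointwise Filter Topology TopologicalSpace

theorem aux_sigma_lt_closed_compact {S : ℕ → Type*} [∀ n, TopologicalSpace (S n)]
    [∀ n, CompactSpace (S n)] (m : ℕ) :
    IsClosed {p : Σ n, S n | p.1 < m} ∧ IsCompact {p : Σ n, S n | p.1 < m} := by
  constructor
  · have h : ({p : Σ n, S n | p.1 < m})ᶜ = Sigma.fst ⁻¹' {n | ¬ n < m} := rfl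
    rw [← isOpen_compl_iff, h]
    exact isOpen_sigma_fst_preimage _
  · have h : {p : Σ n, S n | p.1 < m} = ⋃ n ∈ Finset.range m, Set.range (Sigma.mk n) := by
      ext ⟨n, x⟩
      simp only [mem_setOf_eq, mem_iUnion, Finset.mem_range, Set.mem_range]
      constructor
      · intro h; exact ⟨n, h, x, rfl⟩
      · rintro ⟨i, hi, y, h⟩
        have : i = n := congrArg Sigma.fst h
        exact this ▸ hi
    rw [h]
    exact (Finset.range m).isCompact_biUnion fun n _ => isCompact_range continuous_sigmaMk

theorem aux_secondCountable_of_surj {X Y : Type*} [TopologicalSpace X] [TopologicalSpace Y]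
    [CompactSpace X] [SecondCountableTopology X] [T2Space Y]
    {f : X → Y} (hf : Continuous f) (hsurj : Function.Surjective f) :
    SecondCountableTopology Y := by
  obtain ⟨B, hBc, -, hB⟩ := exists_countable_basis X
  have hcl : IsClosedMap f := hf.isClosedMap
  set F : Set (Set X) → Set Y := fun s => (f '' (⋃₀ s)ᶜ)ᶜ with hF
  have hcnt : ((fun s => F s) '' {s | s.Finite ∧ s ⊆ B}).Countable :=
    (countable_setOf_finite_subset hBc).image _
  refine IsTopologicalBasis.secondCountableTopology (b := (fun s => F s) '' {s | s.Finite ∧ s ⊆ B}) ?_ hcnt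
  refine isTopologicalBasis_of_isOpen_of_nhds ?_ ?_
  · rintro _ ⟨s, ⟨hfin, hsub⟩, rfl⟩
    have hopen : IsOpen (⋃₀ s) := isOpen_sUnion fun t ht => hB.isOpen (hsub ht)
    exact (hcl _ hopen.isClosed_compl).isOpen_compl
  · intro y O hyO hO
    have hfib : IsCompact (f ⁻¹' {y}) := (isClosed_singleton.preimage hf).isCompact
    have hsubO : f ⁻¹' {y} ⊆ f ⁻¹' O := fun x hx => by
      simp only [mem_preimage, mem_singleton_iff] at hx; simp [mem_preimage, hx, hyO]
    have hchoice : ∀ x : f ⁻¹' {y}, ∃ v ∈ B, (x : X) ∈ v ∧ v ⊆ f ⁻¹' O :=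
      fun x => hB.exists_subset_of_mem_open (hsubO x.2) (hO.preimage hf)
    choose v hvB hxv hvO using hchoice
    obtain ⟨t, ht⟩ := hfib.elim_finite_subcover v (fun x => hB.isOpen (hvB x))
      (fun x hx => mem_iUnion.2 ⟨⟨x, hx⟩, hxv _⟩)
    refine ⟨F (v '' ↑t), ⟨_, ⟨(t.finite_toSet.image v), image_subset_iff.2 fun x _ => hvB x⟩, rfl⟩, ?_, ?_⟩
    · rw [hF]
      simp only [mem_compl_iff, mem_image, not_exists, not_and]
      intro x hx hfx
      refine hx ?_
      have hxf : x ∈ f ⁻¹' {y} := by simp [mem_preimage, hfx]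
      obtain ⟨i, hit, hxi⟩ := mem_iUnion₂.1 (ht hxf)
      exact ⟨v i, ⟨i, hit, rfl⟩, hxi⟩
    · intro z hz
      by_contra hzO
      obtain ⟨x, rfl⟩ := hsurj z
      refine hz ⟨x, fun hx => ?_, rfl⟩
      obtain ⟨_, ⟨i, -, rfl⟩, hxi⟩ := hx
      exact hzO (hvO i hxi)

theorem aux_onePoint_sigma_secondCountable {S : ℕ → Type*} [∀ n, TopologicalSpace (S n)]
    [∀ n, CompactSpace (S n)] [∀ n, SecondCountableTopology (S n)] :
    SecondCountableTopology (OnePoint (Σ n, S n)) := by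
  set Sig := (Σ n, S n)
  set C : ℕ → Set Sig := fun m => {p | p.1 < m} with hC
  have hCclosed : ∀ m, IsClosed (C m) := fun m => (aux_sigma_lt_closed_compact m).1
  have hCcompact : ∀ m, IsCompact (C m) := fun m => (aux_sigma_lt_closed_compact m).2
  set V : ℕ → Set (OnePoint Sig) := fun m => ((↑) '' (C m))ᶜ with hV
  obtain ⟨B, hBc, -, hB⟩ := exists_countable_basis Sig
  set 𝒞 : Set (Set (OnePoint Sig)) := ((fun u : Set Sig => ((↑) '' u : Set (OnePoint Sig))) '' B) ∪ Set.range V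
  have hcnt : 𝒞.Countable := (hBc.image _).union (countable_range _)
  refine IsTopologicalBasis.secondCountableTopology (b := 𝒞) ?_ hcnt
  refine isTopologicalBasis_of_isOpen_of_nhds ?_ ?_
  · rintro s (⟨u, hu, rfl⟩ | ⟨m, rfl⟩)
    · exact OnePoint.isOpen_image_coe.2 (hB.isOpen hu)
    · exact OnePoint.isOpen_compl_image_coe.2 ⟨hCclosed m, hCcompact m⟩
  · intro z O hzO hO
    induction z using OnePoint.rec with
    | infty =>
      obtain ⟨-, hcpt⟩ := (OnePoint.isOpen_iff_of_mem hzO).1 hO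
      -- hcpt : IsCompact ((↑) ⁻¹' O)ᶜ ; find m with that ⊆ C m
      obtain ⟨t, ht⟩ := hcpt.elim_finite_subcover (fun n => Sigma.fst ⁻¹' {n})
        (fun n => isOpen_sigma_fst_preimage _) (fun p _ => mem_iUnion.2 ⟨p.1, rfl⟩)
      set m := (t.sup id) + 1
      refine ⟨V m, Or.inr ⟨m, rfl⟩, ?_, ?_⟩
      · simp only [hV, mem_compl_iff, mem_image]
        rintro ⟨p, -, hp⟩
        exact (OnePoint.coe_ne_infty p) hp
      · rintro (_ | p) hp
        · exact hzO
        · simp only [hV, mem_compl_iff, mem_image] at hp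
          by_contra hpO
          have hpc : p ∈ ((↑) ⁻¹' O : Set Sig)ᶜ := hpO
          obtain ⟨i, hit, hpi⟩ := mem_iUnion₂.1 (ht hpc)
          exact hp ⟨p, by
            simp only [hC, mem_setOf_eq]
            have : p.1 = i := hpi
            calc p.1 = i := this
              _ ≤ t.sup id := Finset.le_sup (f := id) hit
              _ < m := Nat.lt_succ_self _, rfl⟩
    | coe p =>
      have hopen : IsOpen ((↑) ⁻¹' O : Set Sig) := hO.preimage OnePoint.continuous_coe
      obtain ⟨u, huB, hpu, huO⟩ := hB.exists_subset_of_mem_open (show p ∈ (↑) ⁻¹' O from hzO) hopen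
      exact ⟨(↑) '' u, Or.inl ⟨u, huB, rfl⟩, ⟨p, hpu, rfl⟩,
        (image_mono huO).trans (image_preimage_subset _ _)⟩

theorem stmt14 {E : Type*} [AddCommGroup E] [Module ℝ E] [TopologicalSpace E]
    [IsTopologicalAddGroup E] [ContinuousSMul ℝ E] [LocallyConvexSpace ℝ E] [T2Space E]
    (K : ℕ → Set E) (hK : ∀ n, IsCompact (K n))
    (hKm : ∀ n, TopologicalSpace.MetrizableSpace (K n))
    (hbd : Bornology.IsVonNBounded ℝ (⋃ n, K n))
    (b : ℕ → ℝ) (hb : ∀ n, 0 < b n) (hb0 : Tendsto b atTop (𝓝 0)) :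
    IsCompact ((⋃ n, b n • K n) ∪ {0}) ∧
    TopologicalSpace.MetrizableSpace (((⋃ n, b n • K n) ∪ {0} : Set E)) := by
  classical
  -- the key smallness fact
  have hsmall : ∀ U ∈ 𝓝 (0 : E), ∃ m : ℕ, ∀ n, m ≤ n → b n • K n ⊆ U := by
    intro U hU
    have h1 : Tendsto (fun n => b n • ⋃ i, K i) atTop (𝓝 (0 : E)).smallSets :=
      hbd.tendsto_smallSets_nhds.comp hb0
    have h2 : ∀ᶠ n in atTop, b n • ⋃ i, K i ⊆ U := (Filter.tendsto_smallSets_iff.1 h1) U hU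
    obtain ⟨m, hm⟩ := Filter.eventually_atTop.1 h2
    exact ⟨m, fun n hn => (smul_set_mono (subset_iUnion K n)).trans (hm n hn)⟩
  haveI hCScpt : ∀ n, CompactSpace (b n • K n : Set E) := fun n =>
    isCompact_iff_compactSpace.1 ((hK n).smul (b n))
  haveI hSCK : ∀ n, SecondCountableTopology (K n) := by
    intro n
    haveI := hKm n
    haveI : CompactSpace (K n) := isCompact_iff_compactSpace.1 (hK n)
    letI : MetricSpace (K n) := TopologicalSpace.metrizableSpaceMetric (K n)
    exact EMetric.secondCountable_of_sigmaCompact _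
  haveI hSC : ∀ n, SecondCountableTopology (b n • K n : Set E) := by
    intro n
    have hne : b n ≠ 0 := (hb n).ne'
    have e : (K n) ≃ₜ ((Homeomorph.smulOfNeZero (b n) hne (α := E)) '' K n) :=
      (Homeomorph.smulOfNeZero (b n) hne (α := E)).image (K n)
    have hset : (Homeomorph.smulOfNeZero (b n) hne (α := E)) '' K n = b n • K n := rfl
    rw [hset] at e
    exact e.symm.secondCountableTopology
  set Sig := Σ n, (b n • K n : Set E) with hSig
  set f : OnePoint Sig → E := fun x => Option.elim x 0 (fun p => (p.2 : E)) with hf'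
  have hfc : Continuous f := by
    rw [OnePoint.continuous_iff]
    constructor
    · rw [Filter.tendsto_def]
      intro U hU
      rw [Filter.mem_coclosedCompact_iff]
      obtain ⟨m, hm⟩ := hsmall U (by exact hU)
      have hsub : ((fun x : Sig => f ↑x) ⁻¹' U)ᶜ ⊆ {p : Sig | p.1 < m} := by
        intro p hp
        by_contra hlt
        exact hp (hm p.1 (not_lt.1 hlt) p.2.2)
      exact IsCompact.of_isClosed_subset (aux_sigma_lt_closed_compact m).2 isClosed_closure
        (closure_minimal hsub (aux_sigma_lt_closed_compact m).1)
    · exact continuous_sigma fun n => continuous_subtype_val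
  have hrange : Set.range f = (⋃ n, b n • K n) ∪ {0} := by
    ext x
    constructor
    · rintro ⟨y, rfl⟩
      cases y with
      | infty => exact Or.inr rfl
      | coe p => exact Or.inl (mem_iUnion.2 ⟨p.1, p.2.2⟩)
    · rintro (hx | hx)
      · obtain ⟨n, hn⟩ := mem_iUnion.1 hx
        exact ⟨Option.some ⟨n, ⟨x, hn⟩⟩, rfl⟩
      · exact ⟨Option.none, hx.symm⟩
  have hcpt : IsCompact ((⋃ n, b n • K n) ∪ {0} : Set E) := hrange ▸ isCompact_range hfc
  refine ⟨hcpt, ?_⟩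
  haveI : SecondCountableTopology (OnePoint Sig) := aux_onePoint_sigma_secondCountable
  set Kb : Set E := (⋃ n, b n • K n) ∪ {0} with hKb
  set g : OnePoint Sig → Kb := fun x => ⟨f x, hrange ▸ mem_range_self x⟩ with hg'
  have hgc : Continuous g := hfc.subtype_mk _
  have hgs : Function.Surjective g := by
    rintro ⟨y, hy⟩
    rw [← hrange] at hy
    obtain ⟨x, hx⟩ := hy
    exact ⟨x, Subtype.ext hx⟩
  haveI : SecondCountableTopology Kb := aux_secondCountable_of_surj hgc hgs
  infer_instance
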